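/- Let (X₀, r₀) and (Y, r_Y) be disjoint square-free solutions of the YBE. Form the wreath product solution (Z, r) = (X₀, r₀) ≀ (Y, r_Y): Z is the disjoint union of copies X_α of X₀ indexed by α ∈ Y together with Y; r restricts to the copy of r₀ on each X_α and to r_Y on Y; distinct copies X_α, X_β act trivially on each other; and for β ∈ Y, L_β maps X_α to X_{ᵝα} by the identity on lettered indices: L_β(t_{α,x}) = t_{ᵝα, x}. Then (Z,r) is a square-free solution of the YBE. -/
import Mathlib


namespace YBPaper

variable {X : Type*}

/-- Left translation: `lact r x y = ˣy`. -/
def lact (r : X × X → X × X) (x y : X) : X := (r (x, y)).1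

/-- Right translation: `ract r x y = xʸ`. -/
def ract (r : X × X → X × X) (x y : X) : X := (r (x, y)).2

def r12 (r : X × X → X × X) : X × X × X → X × X × X :=
  fun p => ((r (p.1, p.2.1)).1, (r (p.1, p.2.1)).2, p.2.2)

def r23 (r : X × X → X × X) : X × X × X → X × X × X :=
  fun p => (p.1, r (p.2.1, p.2.2))

/-- A non-degenerate involutive square-free set-theoretic solution of the YBE. -/
structure IsSquareFreeSolution (r : X × X → X × X) : Prop where
  nondegL : ∀ x : X, Function.Bijective fun y => (r (x, y)).1
  nondegR : ∀ y : X, Function.Bijective fun x => (r (x, y)).2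
  invol : ∀ p : X × X, r (r p) = p
  sqfree : ∀ x : X, r (x, x) = (x, x)
  braided : ∀ p : X × X × X, r12 r (r23 r (r12 r p)) = r23 r (r12 r (r23 r p))

/-- `relk l k x y` means the images of `x` and `y` in the `k`-th retract coincide. -/
def relk (l : X → X → X) : ℕ → X → X → Prop
  | 0 => fun x y => x = y
  | (k+1) => fun x y => ∀ z : X, relk l k (l x z) (l y z)

/-- `mplLe l m` : the `m`-th retract is a one-element solution, i.e. `mpl ≤ m`. -/
def mplLe (l : X → X → X) (m : ℕ) : Prop := ∀ x y : X, relk l m x y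

/-- `mplEq l m` : the multipermutation level is exactly `m`. -/
def mplEq (l : X → X → X) (m : ℕ) : Prop := mplLe l m ∧ ∀ k < m, ¬ mplLe l k

/-- The set of left translations, as permutations. -/
def lperms (r : X × X → X × X) : Set (Equiv.Perm X) :=
  {σ : Equiv.Perm X | ∃ x : X, ∀ y : X, σ y = (r (x, y)).1}

/-- The YB permutation group `𝒢(X,r)`, generated by the left translations. -/
def Gcal (r : X × X → X × X) : Subgroup (Equiv.Perm X) := Subgroup.closure (lperms r)


/-- The wreath product map on `Z = (Y × X₀) ⊕ Y`, where `(α, x)` represents the copy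
`t_{α,x}` of `x ∈ X₀` indexed by `α ∈ Y`:
* within one copy it is the copy of `r₀`; distinct copies act trivially on each other;
* `β ∈ Y` maps `t_{α,x}` to `t_{ᵝα,x}` and is unchanged; elements of copies act
  trivially on `Y` (with the inverse permutation appearing on the right output);
* on `Y` it is `r_Y`. -/
noncomputable def wreathR {X0 Y : Type*} [Nonempty Y] [DecidableEq Y]
    (r0 : X0 × X0 → X0 × X0) (rY : Y × Y → Y × Y) :
    ((Y × X0) ⊕ Y) × ((Y × X0) ⊕ Y) → ((Y × X0) ⊕ Y) × ((Y × X0) ⊕ Y) :=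
  fun p =>
    match p with
    | (Sum.inl (α, x), Sum.inl (α', x')) =>
        if α = α' then
          (Sum.inl (α, (r0 (x, x')).1), Sum.inl (α, (r0 (x, x')).2))
        else (Sum.inl (α', x'), Sum.inl (α, x))
    | (Sum.inr β, Sum.inl (α, x)) => (Sum.inl ((rY (β, α)).1, x), Sum.inr β)
    | (Sum.inl (α, x), Sum.inr β) =>
        (Sum.inr β, Sum.inl (Function.invFun (fun a => (rY (β, a)).1) α, x))
    | (Sum.inr β, Sum.inr γ) => (Sum.inr (rY (β, γ)).1, Sum.inr (rY (β, γ)).2)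


/-- Auxiliary: the three componentwise equations of the braid relation. -/
theorem braid_comp {r : X × X → X × X}
    (hbr : ∀ p : X × X × X, r12 r (r23 r (r12 r p)) = r23 r (r12 r (r23 r p)))
    (a b c : X) :
    (r ((r (a,b)).1, (r ((r (a,b)).2, c)).1)).1 = (r (a, (r (b,c)).1)).1 ∧
    (r ((r (a,b)).1, (r ((r (a,b)).2, c)).1)).2 = (r ((r (a,(r (b,c)).1)).2, (r (b,c)).2)).1 ∧
    (r ((r (a,b)).2, c)).2 = (r ((r (a,(r (b,c)).1)).2, (r (b,c)).2)).2 := by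
  have h := hbr (a, b, c)
  simp only [r12, r23, Prod.ext_iff] at h
  exact ⟨h.1, h.2.1, h.2.2⟩

/-- the wreath product of two square-free solutions is a square-free
solution. -/
theorem stmt18 {X0 Y : Type*} [Nonempty Y] [DecidableEq Y]
    (r0 : X0 × X0 → X0 × X0) (rY : Y × Y → Y × Y)
    (h0 : IsSquareFreeSolution r0) (hY : IsSquareFreeSolution rY) :
    IsSquareFreeSolution (wreathR r0 rY) := by
  classical
  have hLb := hY.nondegL
  have hinvL : ∀ β a : Y, Function.invFun (fun a => (rY (β, a)).1) ((rY (β, a)).1) = a :=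
    fun β a => Function.leftInverse_invFun (hLb β).1 a
  have hinvR : ∀ β a : Y, (rY (β, Function.invFun (fun a => (rY (β, a)).1) a)).1 = a :=
    fun β a => Function.rightInverse_invFun (hLb β).2 a
  have hσinj : ∀ β : Y, Function.Injective fun a => (rY (β, a)).1 := fun β => (hLb β).1
  have hinvInj : ∀ β : Y, Function.Injective (Function.invFun (fun a => (rY (β, a)).1)) := by
    intro β a b hab
    have := congrArg (fun t => (rY (β, t)).1) hab
    simpa [hinvR] using this
  have hcomp : ∀ β γ δ : Y,
      (rY ((rY (β, γ)).1, (rY ((rY (β, γ)).2, δ)).1)).1 = (rY (β, (rY (γ, δ)).1)).1 :=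
    fun β γ δ => (braid_comp hY.braided β γ δ).1
  -- σ_{ᵝγ}⁻¹ (σβ a) = σ_{β^γ} (σγ⁻¹ a)
  have hcomp2 : ∀ β γ a : Y,
      Function.invFun (fun t => (rY ((rY (β, γ)).1, t)).1) ((rY (β, a)).1)
        = (rY ((rY (β, γ)).2, Function.invFun (fun t => (rY (γ, t)).1) a)).1 := by
    intro β γ a
    apply hσinj (rY (β, γ)).1
    show (rY ((rY (β, γ)).1, _)).1 = (rY ((rY (β, γ)).1, _)).1
    rw [hinvR, hcomp, hinvR]
  -- σγ⁻¹ (σβ⁻¹ a) = σ_{β^γ}⁻¹ (σ_{ᵝγ}⁻¹ a)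
  have hcomp3 : ∀ β γ a : Y,
      Function.invFun (fun t => (rY (γ, t)).1) (Function.invFun (fun t => (rY (β, t)).1) a)
        = Function.invFun (fun t => (rY ((rY (β, γ)).2, t)).1)
            (Function.invFun (fun t => (rY ((rY (β, γ)).1, t)).1) a) := by
    intro β γ a
    have l1 : (rY (β, (rY (γ, Function.invFun (fun t => (rY (γ, t)).1)
        (Function.invFun (fun t => (rY (β, t)).1) a))).1)).1 = a := by
      simp only [hinvR]
    have l2 : (rY (β, (rY (γ, Function.invFun (fun t => (rY ((rY (β, γ)).2, t)).1)
        (Function.invFun (fun t => (rY ((rY (β, γ)).1, t)).1) a))).1)).1 = a := by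
      rw [← hcomp]
      simp only [hinvR]
    exact hσinj γ (hσinj β (l1.trans l2.symm))
  refine ⟨?_, ?_, ?_, ?_, ?_⟩
  · -- nondegL
    rintro (⟨α, x⟩ | β)
    · haveI : Nonempty X0 := ⟨x⟩
      refine Function.bijective_iff_has_inverse.mpr
        ⟨fun w => match w with
          | Sum.inl (α', x') =>
              if α = α' then Sum.inl (α, Function.invFun (fun y => (r0 (x, y)).1) x')
              else Sum.inl (α', x')
          | Sum.inr β => Sum.inr β, ?_, ?_⟩
      · rintro (⟨α', x'⟩ | β)
        · by_cases h : α = α'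
          · subst h
            simp [wreathR, Function.leftInverse_invFun (h0.nondegL x).1 x']
          · simp [wreathR, h]
        · simp [wreathR]
      · rintro (⟨α', x'⟩ | β)
        · by_cases h : α = α'
          · subst h
            simp [wreathR, Function.rightInverse_invFun (h0.nondegL x).2 x']
          · simp [wreathR, h]
        · simp [wreathR]
    · refine Function.bijective_iff_has_inverse.mpr
        ⟨fun w => match w with
          | Sum.inl (α, x) => Sum.inl (Function.invFun (fun a => (rY (β, a)).1) α, x)
          | Sum.inr γ => Sum.inr (Function.invFun (fun a => (rY (β, a)).1) γ), ?_, ?_⟩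
      · rintro (⟨α, x⟩ | γ)
        · simp [wreathR, hinvL]
        · simp [wreathR, hinvL]
      · rintro (⟨α, x⟩ | γ)
        · simp [wreathR, hinvR]
        · simp [wreathR, hinvR]
  · -- nondegR
    rintro (⟨α', x'⟩ | γ)
    · haveI : Nonempty X0 := ⟨x'⟩
      refine Function.bijective_iff_has_inverse.mpr
        ⟨fun w => match w with
          | Sum.inl (a, u) =>
              if a = α' then Sum.inl (α', Function.invFun (fun t => (r0 (t, x')).2) u)
              else Sum.inl (a, u)
          | Sum.inr β => Sum.inr β, ?_, ?_⟩
      · rintro (⟨α, x⟩ | β)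
        · by_cases h : α = α'
          · subst h
            simp [wreathR, Function.leftInverse_invFun (h0.nondegR x').1 x]
          · simp [wreathR, h]
        · simp [wreathR]
      · rintro (⟨a, u⟩ | β)
        · by_cases h : a = α'
          · subst h
            simp [wreathR, Function.rightInverse_invFun (h0.nondegR x').2 u]
          · simp [wreathR, h]
        · simp [wreathR]
    · refine Function.bijective_iff_has_inverse.mpr
        ⟨fun w => match w with
          | Sum.inl (a, u) => Sum.inl ((rY (γ, a)).1, u)
          | Sum.inr b => Sum.inr (Function.invFun (fun β => (rY (β, γ)).2) b), ?_, ?_⟩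
      · rintro (⟨α, x⟩ | β)
        · simp [wreathR, hinvR]
        · simp [wreathR, Function.leftInverse_invFun (hY.nondegR γ).1 β]
      · rintro (⟨a, u⟩ | b)
        · simp [wreathR, hinvL]
        · simp [wreathR, Function.rightInverse_invFun (hY.nondegR γ).2 b]
  · -- involutive
    rintro ⟨(⟨α, x⟩ | β), (⟨α', x'⟩ | γ)⟩
    · by_cases h : α = α'
      · subst h
        simp [wreathR, Prod.mk.eta, h0.invol (x, x'), Prod.ext_iff]
      · simp [wreathR, h, Ne.symm h]
    · simp [wreathR, hinvR]
    · simp [wreathR, hinvL]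
    · have h := hY.invol (β, γ)
      simp only [Prod.ext_iff] at h
      simp [wreathR, Prod.mk.eta, Prod.ext_iff]
      exact ⟨h.1, h.2⟩
  · -- square-free
    rintro (⟨α, x⟩ | β)
    · simp [wreathR, h0.sqfree x, Prod.ext_iff]
    · have h := hY.sqfree β
      simp only [Prod.ext_iff] at h
      simp [wreathR, Prod.ext_iff]
      exact ⟨h.1, h.2⟩
  · -- braided
    rintro ⟨(⟨α, x⟩ | β), (⟨α', x'⟩ | γ), (⟨α'', x''⟩ | δ)⟩
    · -- inl inl inl
      by_cases h1 : α = α'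
      · subst h1
        by_cases h2 : α = α''
        · subst h2
          have hb := braid_comp h0.braided x x' x''
          simp [wreathR, r12, r23, hb.1, hb.2.1, hb.2.2]
        · simp [wreathR, r12, r23, h2]
      · by_cases h2 : α' = α''
        · subst h2
          simp [wreathR, r12, r23, h1, Ne.symm h1]
        · by_cases h3 : α = α''
          · subst h3
            simp [wreathR, r12, r23, h1, h2, Ne.symm h1, Ne.symm h2]
          · simp [wreathR, r12, r23, h1, h2, h3, Ne.symm h1, Ne.symm h2, Ne.symm h3]
    · -- inl inl inr
      by_cases h1 : α = α'
      · subst h1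
        simp [wreathR, r12, r23]
      · have h2 : Function.invFun (fun a => (rY (δ, a)).1) α
            ≠ Function.invFun (fun a => (rY (δ, a)).1) α' := fun h => h1 (hinvInj δ h)
        simp [wreathR, r12, r23, h1, h2]
    · -- inl inr inl
      by_cases h1 : α = (rY (γ, α'')).1
      · have h2 : Function.invFun (fun a => (rY (γ, a)).1) α = α'' := by
          rw [h1, hinvL]
        simp [wreathR, r12, r23, h1, h2, hinvR, hinvL]
      · have h2 : Function.invFun (fun a => (rY (γ, a)).1) α ≠ α'' := by
          intro h
          apply h1
          rw [← h, hinvR]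
        simp [wreathR, r12, r23, h1, h2]
    · -- inl inr inr
      simp [wreathR, r12, r23, hcomp3 γ δ α]
    · -- inr inl inl
      by_cases h1 : α' = α''
      · subst h1
        simp [wreathR, r12, r23]
      · have h2 : (rY (β, α')).1 ≠ (rY (β, α'')).1 := fun h => h1 (hσinj β h)
        simp [wreathR, r12, r23, h1, h2]
    · -- inr inl inr
      simp [wreathR, r12, r23, hcomp2 β δ α']
    · -- inr inr inl
      simp [wreathR, r12, r23, hcomp β γ α'']
    · -- inr inr inr
      have hb := braid_comp hY.braided β γ δ
      simp [wreathR, r12, r23, hb.1, hb.2.1, hb.2.2]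


end YBPaper
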